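/- Let β > 0, S₀ ≥ S_∞, and define S(t) = (S₀ − S_∞)·e^{−βt} + S_∞. Let a > 0, W ≥ 0, and let δ, N be reals with δ < N. Set B = β·(S₀ − S_∞)·e^{−βt₀} + (a²/2)·W. If t ≥ t₀ satisfies S(t) − δ ≤ (a²/4)·(t − t₀)² + (a²/2)·W·(t − t₀) + (S(t₀) − N), then t − t₀ ≥ (−B + √(B² + a²·(N − δ)))/(a²/2). -/

import Mathlib

theorem turn_on_miet_scalar_bound (β S₀ Sinf a W δ N t₀ t B : ℝ)
    (hβ : 0 < β) (hS₀ : Sinf ≤ S₀) (ha : 0 < a) (hW : 0 ≤ W) (hδN : δ < N)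
    (S : ℝ → ℝ) (hS : ∀ τ, S τ = (S₀ - Sinf) * Real.exp (-β * τ) + Sinf)
    (hB : B = β * (S₀ - Sinf) * Real.exp (-β * t₀) + a ^ 2 / 2 * W)
    (ht : t₀ ≤ t)
    (htrig : S t - δ ≤ a ^ 2 / 4 * (t - t₀) ^ 2 + a ^ 2 / 2 * W * (t - t₀) + (S t₀ - N)) :
    t - t₀ ≥ (-B + Real.sqrt (B ^ 2 + a ^ 2 * (N - δ))) / (a ^ 2 / 2) := by
  set x := t - t₀ with hxdef
  have hx : 0 ≤ x := by linarith
  have hc : 0 ≤ S₀ - Sinf := by linarith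
  have he₀ : 0 < Real.exp (-β * t₀) := Real.exp_pos _
  have hB0 : 0 ≤ B := by
    have : 0 ≤ β * (S₀ - Sinf) * Real.exp (-β * t₀) := by positivity
    nlinarith [sq_nonneg a]
  -- tangent line bound: 1 - β x ≤ exp (-β x)
  have hexp : 1 - β * x ≤ Real.exp (-(β * x)) := by
    have := Real.add_one_le_exp (-(β * x))
    linarith
  have hSt : Real.exp (-β * t) = Real.exp (-β * t₀) * Real.exp (-(β * x)) := by
    rw [← Real.exp_add, hxdef]; ring_nf
  -- key quadratic inequality
  have key : N - δ ≤ a ^ 2 / 4 * x ^ 2 + B * x := by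
    have h1 : S t₀ - S t ≤ β * (S₀ - Sinf) * Real.exp (-β * t₀) * x := by
      rw [hS t, hS t₀, hSt]
      have hmul : (S₀ - Sinf) * Real.exp (-β * t₀) * (1 - β * x)
          ≤ (S₀ - Sinf) * Real.exp (-β * t₀) * Real.exp (-(β * x)) := by
        apply mul_le_mul_of_nonneg_left hexp (by positivity)
      nlinarith
    rw [hB]
    ring_nf
    ring_nf at htrig h1
    linarith
  -- sqrt bound
  have hD : Real.sqrt (B ^ 2 + a ^ 2 * (N - δ)) ≤ B + a ^ 2 / 2 * x := by
    have hle : B ^ 2 + a ^ 2 * (N - δ) ≤ (B + a ^ 2 / 2 * x) ^ 2 := by nlinarith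
    calc Real.sqrt (B ^ 2 + a ^ 2 * (N - δ)) ≤ Real.sqrt ((B + a ^ 2 / 2 * x) ^ 2) :=
          Real.sqrt_le_sqrt hle
      _ = B + a ^ 2 / 2 * x := Real.sqrt_sq (by positivity)
  have ha2 : 0 < a ^ 2 / 2 := by positivity
  rw [ge_iff_le, div_le_iff₀ ha2]
  linarith
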